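/- Let M be a multiplication R-module and N₁, N₂ primary submodules of M. Then N₁ ∩ N₂ is a 2-absorbing primary submodule of M. -/

import Mathlib

open Submodule

variable {R : Type*} [CommRing R] {M : Type*} [AddCommGroup M] [Module R M]

/-- A prime submodule: proper, and `a • m ∈ P` implies `m ∈ P` or `a • ⊤ ≤ P`. -/
def IsPrimeSubmodule (P : Submodule R M) : Prop :=
  P ≠ ⊤ ∧ ∀ (a : R) (m : M), a • m ∈ P → m ∈ P ∨ a ∈ P.colon ⊤

/-- The `M`-radical of `N`: intersection of prime submodules containing `N`
(equal to `⊤` when there are none). -/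
def mRad (N : Submodule R M) : Submodule R M :=
  sInf {P : Submodule R M | IsPrimeSubmodule P ∧ N ≤ P}

/-- 2-absorbing primary submodule. -/
def Is2AbsorbingPrimary (N : Submodule R M) : Prop :=
  N ≠ ⊤ ∧ ∀ (a b : R) (m : M), (a * b) • m ∈ N →
    a • m ∈ mRad N ∨ b • m ∈ mRad N ∨ a * b ∈ N.colon ⊤

/-- Multiplication module: every submodule is `I • ⊤` for some ideal `I`. -/
def IsMultiplicationModule (R M : Type*) [CommRing R] [AddCommGroup M] [Module R M] : Prop :=
  ∀ N : Submodule R M, ∃ I : Ideal R, N = I • (⊤ : Submodule R M)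

/-- Primary submodule. -/
def IsPrimarySubmodule (P : Submodule R M) : Prop :=
  P ≠ ⊤ ∧ ∀ (a : R) (m : M), a • m ∈ P → m ∈ P ∨ a ∈ (P.colon ⊤).radical

/-- 2-absorbing primary ideal. -/
def Is2AbsorbingPrimaryIdeal {R : Type*} [CommRing R] (I : Ideal R) : Prop :=
  I ≠ ⊤ ∧ ∀ a b c : R, a * b * c ∈ I → a * b ∈ I ∨ a * c ∈ I.radical ∨ b * c ∈ I.radical

/-- 2-absorbing submodule. -/
def Is2AbsorbingSubmodule (K : Submodule R M) : Prop :=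
  K ≠ ⊤ ∧ ∀ (a b : R) (m : M), (a * b) • m ∈ K →
    a * b ∈ K.colon ⊤ ∨ a • m ∈ K ∨ b • m ∈ K

lemma colon_ne_top {N : Submodule R M} (h : N ≠ ⊤) : N.colon ⊤ ≠ ⊤ := by
  intro hc
  apply h
  rw [eq_top_iff]
  intro x _
  have h1 : (1 : R) ∈ N.colon ⊤ := hc ▸ Submodule.mem_top
  simpa using Submodule.mem_colon.mp h1 x (Set.mem_univ _)

lemma colon_isPrimary {N : Submodule R M} (h : IsPrimarySubmodule N) :
    (N.colon ⊤).IsPrimary := by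
  rw [Ideal.isPrimary_iff]
  refine ⟨colon_ne_top h.1, ?_⟩
  intro x y hxy
  by_cases hy : y ∈ (N.colon ⊤).radical
  · exact Or.inr hy
  · left
    rw [Submodule.mem_colon]
    intro z _
    have h2 := Submodule.mem_colon.mp hxy z (Set.mem_univ _)
    rw [mul_comm, mul_smul] at h2
    rcases h.2 y (x • z) h2 with h' | h'
    · exact h'
    · exact absurd h' hy

lemma prime_colon_isPrime {P : Submodule R M} (hP : IsPrimeSubmodule P) :
    (P.colon ⊤).IsPrime := by
  refine ⟨colon_ne_top hP.1, ?_⟩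
  intro x y hxy
  by_cases hx : x ∈ P.colon ⊤
  · exact Or.inl hx
  · right
    rw [Submodule.mem_colon]
    intro z _
    have h2 := Submodule.mem_colon.mp hxy z (Set.mem_univ _)
    rw [mul_smul] at h2
    rcases hP.2 x (y • z) h2 with h' | h'
    · exact h'
    · exact absurd h' hx

lemma primary_aux {R : Type*} [CommRing R] {q₁ q₂ : Ideal R} (h₁ : q₁.IsPrimary)
    (h₂ : q₂.IsPrimary) {a b c : R} (habc : a * b * c ∈ q₁ ⊓ q₂) (hab : a * b ∉ q₁) :
    a * c ∈ q₁.radical ⊓ q₂.radical ∨ b * c ∈ q₁.radical ⊓ q₂.radical := by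
  have hc1 : c ∈ q₁.radical :=
    ((Ideal.isPrimary_iff.mp h₁).2 habc.1).resolve_left hab
  have hp₂ : (q₂.radical).IsPrime := Ideal.isPrime_radical h₂
  have habc2 : a * b * c ∈ q₂.radical := Ideal.le_radical habc.2
  rcases hp₂.mem_or_mem habc2 with hab2 | hc2
  · rcases hp₂.mem_or_mem hab2 with ha | hb
    · exact Or.inl ⟨Ideal.mul_mem_left _ a hc1, Ideal.mul_mem_right c _ ha⟩
    · exact Or.inr ⟨Ideal.mul_mem_left _ b hc1, Ideal.mul_mem_right c _ hb⟩
  · exact Or.inl ⟨Ideal.mul_mem_left _ a hc1, Ideal.mul_mem_left _ a hc2⟩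

lemma primary_inf_2abs {R : Type*} [CommRing R] {q₁ q₂ : Ideal R} (h₁ : q₁.IsPrimary)
    (h₂ : q₂.IsPrimary) (a b c : R) (habc : a * b * c ∈ q₁ ⊓ q₂) :
    a * b ∈ q₁ ⊓ q₂ ∨ a * c ∈ (q₁ ⊓ q₂).radical ∨ b * c ∈ (q₁ ⊓ q₂).radical := by
  rw [Ideal.radical_inf]
  by_cases hab1 : a * b ∈ q₁
  · by_cases hab2 : a * b ∈ q₂
    · exact Or.inl ⟨hab1, hab2⟩
    · have habc' : a * b * c ∈ q₂ ⊓ q₁ := ⟨habc.2, habc.1⟩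
      rcases primary_aux h₂ h₁ habc' hab2 with h | h
      · exact Or.inr (Or.inl ⟨h.2, h.1⟩)
      · exact Or.inr (Or.inr ⟨h.2, h.1⟩)
  · rcases primary_aux h₁ h₂ habc hab1 with h | h
    · exact Or.inr (Or.inl h)
    · exact Or.inr (Or.inr h)

theorem stmt14 (hM : IsMultiplicationModule R M) (N₁ N₂ : Submodule R M)
    (h₁ : IsPrimarySubmodule N₁) (h₂ : IsPrimarySubmodule N₂) :
    Is2AbsorbingPrimary (N₁ ⊓ N₂) := by
  constructor
  · intro h
    exact h₁.1 (eq_top_iff.mpr (h ▸ inf_le_left))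
  intro a b m habm
  obtain ⟨J, hJ⟩ := hM (span R {m})
  set q : Ideal R := (N₁ ⊓ N₂).colon ⊤ with hqdef
  have hqeq : q = (N₁.colon ⊤) ⊓ (N₂.colon ⊤) := by
    ext r
    simp only [hqdef, Submodule.mem_colon, Submodule.mem_inf, Ideal.mem_inf]
    constructor
    · intro h
      exact ⟨fun p hp => (h p hp).1, fun p hp => (h p hp).2⟩
    · intro h p hp
      exact ⟨h.1 p hp, h.2 p hp⟩
  have habj : ∀ j ∈ J, a * b * j ∈ q := by
    intro j hj
    rw [hqdef, Submodule.mem_colon]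
    intro z _
    have hjz : j • z ∈ J • (⊤ : Submodule R M) := Submodule.smul_mem_smul hj Submodule.mem_top
    rw [← hJ, Submodule.mem_span_singleton] at hjz
    obtain ⟨r, hr⟩ := hjz
    have heq : (a * b * j) • z = r • ((a * b) • m) := by
      rw [mul_smul, ← hr, smul_smul, mul_comm, mul_smul]
    rw [heq]
    exact Submodule.smul_mem _ r habm
  by_cases hab : a * b ∈ q
  · exact Or.inr (Or.inr hab)
  have key : ∀ j ∈ J, a * j ∈ q.radical ∨ b * j ∈ q.radical := by
    intro j hj
    have h2 := primary_inf_2abs (colon_isPrimary h₁) (colon_isPrimary h₂) a b j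
      (hqeq ▸ habj j hj)
    rw [← hqeq] at h2
    exact h2.resolve_left hab
  have main : (∀ j ∈ J, a * j ∈ q.radical) ∨ (∀ j ∈ J, b * j ∈ q.radical) := by
    by_contra hcon
    push_neg at hcon
    obtain ⟨⟨x, hx, hax⟩, ⟨y, hy, hby⟩⟩ := hcon
    have hbx : b * x ∈ q.radical := (key x hx).resolve_left hax
    have hay : a * y ∈ q.radical := (key y hy).resolve_right hby
    rcases key (x + y) (J.add_mem hx hy) with h' | h'
    · apply hax
      have hxe : a * x = a * (x + y) - a * y := by ring
      rw [hxe]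
      exact Ideal.sub_mem _ h' hay
    · apply hby
      have hye : b * y = b * (x + y) - b * x := by ring
      rw [hye]
      exact Ideal.sub_mem _ h' hbx
  have final : ∀ c : R, (∀ j ∈ J, c * j ∈ q.radical) → c • m ∈ mRad (N₁ ⊓ N₂) := by
    intro c hc
    rw [mRad, Submodule.mem_sInf]
    rintro P ⟨hPprime, hNP⟩
    have hq1 : q ≤ P.colon ⊤ := by
      intro r hr
      rw [Submodule.mem_colon]
      intro z hz
      exact hNP (Submodule.mem_colon.mp hr z hz)
    have hqP : q.radical ≤ P.colon ⊤ := (prime_colon_isPrime hPprime).radical_le_iff.mpr hq1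
    have hm : m ∈ J • (⊤ : Submodule R M) := by
      rw [← hJ]
      exact Submodule.mem_span_singleton_self m
    refine Submodule.smul_induction_on (p := fun n => c • n ∈ P) hm
      (fun j hj x _ => ?_) (fun x y hx hy => ?_)
    · show c • (j • x) ∈ P
      rw [← mul_smul]
      exact Submodule.mem_colon.mp (hqP (hc j hj)) x (Set.mem_univ _)
    · show c • (x + y) ∈ P
      rw [smul_add]
      exact P.add_mem hx hy
  rcases main with hmain | hmain
  · exact Or.inl (final a hmain)
  · exact Or.inr (Or.inl (final b hmain))
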